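/- Let $f:\{0,1\}^n\to\{0,1\}$ be a Boolean function on the uniform cube and let $r>0$. Then $\|f^{\le r}\|_2^2\le 3^r\,\mu_{1/2}(f)^{3/2}$, where $f^{\le r}$ is the truncation of $f$ to Fourier levels at most $r$ and $\mu_{1/2}(f)=\mathbb{E}[f]$ under the uniform measure. -/

import Mathlib

open Finset
open scoped symmDiff

/-- Weight of a point of the `p`-biased cube. -/
noncomputable def cubeWt {n : ℕ} (p : ℝ) (x : Fin n → Bool) : ℝ :=
  ∏ i, if x i then p else 1 - p

/-- Expectation with respect to the `p`-biased measure on `{0,1}ⁿ`. -/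
noncomputable def cubeE {n : ℕ} (p : ℝ) (f : (Fin n → Bool) → ℝ) : ℝ :=
  ∑ x : Fin n → Bool, cubeWt p x * f x

/-- The `p`-biased Fourier character `χ_S`. -/
noncomputable def chi {n : ℕ} (p : ℝ) (S : Finset (Fin n)) (x : Fin n → Bool) : ℝ :=
  ∏ i ∈ S, ((if x i then (1 : ℝ) else 0) - p) / Real.sqrt (p * (1 - p))

/-- The `p`-biased Fourier coefficient `f̂(S)`. -/
noncomputable def fhat {n : ℕ} (p : ℝ) (f : (Fin n → Bool) → ℝ) (S : Finset (Fin n)) : ℝ :=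
  cubeE p (fun x => f x * chi p S x)

/-- Truncation of `f` to Fourier levels at most `r`. -/
noncomputable def trunc {n : ℕ} (p : ℝ) (f : (Fin n → Bool) → ℝ) (r : ℕ) :
    (Fin n → Bool) → ℝ :=
  fun x => ∑ T ∈ Finset.univ.filter (fun T : Finset (Fin n) => T.card ≤ r),
    fhat p f T * chi p T x

lemma cubeWt_half {n : ℕ} (x : Fin n → Bool) : cubeWt (1/2) x = (1/2 : ℝ)^n := by
  unfold cubeWt
  rw [show (fun i => if x i then (1/2:ℝ) else 1 - 1/2) = fun _ => (1/2:ℝ) by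
    funext i; split <;> norm_num]
  · simp

lemma cubeE_half {n : ℕ} (f : (Fin n → Bool) → ℝ) :
    cubeE (1/2) f = (1/2:ℝ)^n * ∑ x : Fin n → Bool, f x := by
  unfold cubeE
  rw [Finset.mul_sum]
  refine Finset.sum_congr rfl fun x _ => by rw [cubeWt_half]

lemma chi_half {n : ℕ} (S : Finset (Fin n)) (x : Fin n → Bool) :
    chi (1/2) S x = ∏ i ∈ S, (if x i then (1:ℝ) else -1) := by
  unfold chi
  refine Finset.prod_congr rfl fun i _ => ?_
  have h4 : Real.sqrt ((1:ℝ)/2 * (1 - 1/2)) = 1/2 := by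
    rw [show (1:ℝ)/2 * (1 - 1/2) = (1/2)^2 by norm_num, Real.sqrt_sq (by norm_num)]
  rw [h4]
  split <;> norm_num

lemma chi_half_sq {n : ℕ} (S : Finset (Fin n)) (x : Fin n → Bool) :
    (chi (1/2) S x)^2 = 1 := by
  rw [chi_half, ← Finset.prod_pow]
  refine Finset.prod_eq_one fun i _ => by split <;> norm_num

lemma chi_mul {n : ℕ} (S T : Finset (Fin n)) (x : Fin n → Bool) :
    chi (1/2) S x * chi (1/2) T x = chi (1/2) (S ∆ T) x := by
  simp only [chi_half]
  set s : Fin n → ℝ := fun i => if x i then (1:ℝ) else -1 with hs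
  have hsq : ∀ i, s i * s i = 1 := fun i => by simp only [hs]; split <;> norm_num
  have h1 : ∏ i ∈ S, s i = (∏ i ∈ S \ T, s i) * ∏ i ∈ S ∩ T, s i := by
    rw [← Finset.prod_union (Finset.disjoint_sdiff_inter S T), Finset.sdiff_union_inter]
  have h2 : ∏ i ∈ T, s i = (∏ i ∈ T \ S, s i) * ∏ i ∈ S ∩ T, s i := by
    rw [Finset.inter_comm, ← Finset.prod_union (Finset.disjoint_sdiff_inter T S),
      Finset.sdiff_union_inter]
  have h3 : (∏ i ∈ S ∩ T, s i) * (∏ i ∈ S ∩ T, s i) = 1 := by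
    rw [← Finset.prod_mul_distrib]
    exact Finset.prod_eq_one fun i _ => hsq i
  have h4 : S ∆ T = (S \ T) ∪ (T \ S) := rfl
  rw [h4, Finset.prod_union (disjoint_sdiff_sdiff), h1, h2]
  calc ((∏ i ∈ S \ T, s i) * ∏ i ∈ S ∩ T, s i) * ((∏ i ∈ T \ S, s i) * ∏ i ∈ S ∩ T, s i)
      = ((∏ i ∈ S \ T, s i) * ∏ i ∈ T \ S, s i) *
        ((∏ i ∈ S ∩ T, s i) * ∏ i ∈ S ∩ T, s i) := by ring
    _ = _ := by rw [h3, mul_one]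

lemma cubeE_const {n : ℕ} (c : ℝ) : cubeE (n := n) (1/2) (fun _ => c) = c := by
  rw [cubeE_half, Finset.sum_const, Finset.card_univ]
  have : Fintype.card (Fin n → Bool) = 2 ^ n := by simp [Fintype.card_fun]
  rw [this, nsmul_eq_mul]
  push_cast
  rw [← mul_assoc, ← mul_pow]
  norm_num

lemma cubeE_sum {n : ℕ} {α : Type*} (A : Finset α) (F : α → (Fin n → Bool) → ℝ) :
    cubeE (1/2) (fun x => ∑ S ∈ A, F S x) = ∑ S ∈ A, cubeE (1/2) (F S) := by
  simp only [cubeE_half, Finset.mul_sum]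
  rw [Finset.sum_comm]

lemma cubeE_const_mul {n : ℕ} (c : ℝ) (F : (Fin n → Bool) → ℝ) :
    cubeE (1/2) (fun x => c * F x) = c * cubeE (1/2) F := by
  simp only [cubeE_half, Finset.mul_sum]
  exact Finset.sum_congr rfl fun x _ => by ring

lemma cubeE_nonneg {n : ℕ} {F : (Fin n → Bool) → ℝ} (h : ∀ x, 0 ≤ F x) :
    0 ≤ cubeE (1/2) F := by
  rw [cubeE_half]
  exact mul_nonneg (by positivity) (Finset.sum_nonneg fun x _ => h x)

lemma cubeE_mono {n : ℕ} {F G : (Fin n → Bool) → ℝ} (h : ∀ x, F x ≤ G x) :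
    cubeE (1/2) F ≤ cubeE (1/2) G := by
  simp only [cubeE_half]
  exact mul_le_mul_of_nonneg_left (Finset.sum_le_sum fun x _ => h x) (by positivity)

lemma cubeE_CS {n : ℕ} (g h : (Fin n → Bool) → ℝ) :
    (cubeE (1/2) (fun x => g x * h x))^2 ≤
      cubeE (1/2) (fun x => g x ^ 2) * cubeE (1/2) (fun x => h x ^ 2) := by
  simp only [cubeE_half]
  rw [mul_pow]
  calc ((1/2:ℝ)^n)^2 * (∑ x : Fin n → Bool, g x * h x)^2
      ≤ ((1/2:ℝ)^n)^2 * ((∑ x : Fin n → Bool, g x ^ 2) * ∑ x : Fin n → Bool, h x ^ 2) := by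
        exact mul_le_mul_of_nonneg_left
          (Finset.sum_mul_sq_le_sq_mul_sq Finset.univ g h) (by positivity)
    _ = _ := by ring

lemma cubeE_flip {n : ℕ} (i : Fin n) (g : (Fin n → Bool) → ℝ)
    (hg : ∀ x b, g (Function.update x i b) = g x) :
    cubeE (1/2) (fun x => chi (1/2) {i} x * g x) = 0 := by
  rw [cubeE_half]
  have : ∑ x : Fin n → Bool, chi (1/2) {i} x * g x = 0 := by
    apply Finset.sum_ninvolution (fun x => Function.update x i (!(x i)))
    · intro x
      have h1 : chi (1/2) {i} (Function.update x i (!(x i))) = - chi (1/2) {i} x := by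
        simp only [chi_half, Finset.prod_singleton, Function.update_self]
        cases hx : x i <;> simp
      rw [h1, hg]
      ring
    · intro x hx
      intro hcontra
      have := congrFun hcontra i
      simp only [Function.update_self] at this
      exact (Bool.not_ne_self (x i)) this
    · intro x; exact Finset.mem_univ _
    · intro x
      funext j
      by_cases hj : j = i
      · subst hj; simp
      · simp [Function.update_of_ne hj]
  rw [this, mul_zero]

lemma chi_indep {n : ℕ} (i : Fin n) (S : Finset (Fin n)) (hi : i ∉ S)
    (x : Fin n → Bool) (b : Bool) :
    chi (1/2) S (Function.update x i b) = chi (1/2) S x := by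
  simp only [chi_half]
  refine Finset.prod_congr rfl fun j hj => ?_
  exact if_congr (by rw [Function.update_of_ne (fun h : j = i => hi (h ▸ hj))]) rfl rfl

lemma cubeE_chi {n : ℕ} (U : Finset (Fin n)) :
    cubeE (1/2) (chi (1/2) U) = if U = ∅ then 1 else 0 := by
  by_cases hU : U = ∅
  · subst hU
    simp only [if_pos rfl]
    have : chi (n := n) (1/2) ∅ = fun _ => (1:ℝ) := by
      funext x; simp [chi]
    rw [this, cubeE_const, if_pos trivial]
  · rw [if_neg hU]
    obtain ⟨i, hi⟩ := Finset.nonempty_iff_ne_empty.mpr hU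
    have hdecomp : ∀ x, chi (1/2) U x = chi (1/2) {i} x * chi (1/2) (U.erase i) x := by
      intro x
      rw [chi_mul]
      congr 1
      rw [symmDiff_eq_sup_sdiff_inf]
      have h1 : ({i} : Finset (Fin n)) ⊓ U.erase i = ∅ := by
        simp [Finset.inter_comm]
      rw [h1]
      simp only [Finset.sdiff_empty]
      rw [Finset.sup_eq_union]
      exact (Finset.insert_erase hi).symm
    have : cubeE (1/2) (chi (1/2) U) =
        cubeE (1/2) (fun x => chi (1/2) {i} x * chi (1/2) (U.erase i) x) := by
      congr 1; funext x; exact hdecomp x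
    rw [this]
    exact cubeE_flip i _ (fun x b => chi_indep i _ (Finset.notMem_erase i U) x b)

lemma cubeE_chi_mul_chi {n : ℕ} (S T : Finset (Fin n)) :
    cubeE (1/2) (fun x => chi (1/2) S x * chi (1/2) T x) = if S = T then 1 else 0 := by
  have : (fun x => chi (1/2) S x * chi (1/2) T x) = chi (1/2) (S ∆ T) := by
    funext x; exact chi_mul S T x
  rw [this, cubeE_chi]
  congr 1
  simp only [eq_iff_iff]
  constructor
  · intro h; exact symmDiff_eq_bot.mp h
  · intro h; subst h; exact symmDiff_self S

lemma sum_insert_split {n : ℕ} (i : Fin n) (G : Finset (Fin n) → ℝ) :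
    ∑ S : Finset (Fin n), G S =
      (∑ S ∈ Finset.univ.filter (fun S : Finset (Fin n) => i ∉ S), G S) +
      ∑ S ∈ Finset.univ.filter (fun S : Finset (Fin n) => i ∉ S), G (insert i S) := by
  rw [← Finset.sum_filter_add_sum_filter_not Finset.univ (fun S : Finset (Fin n) => i ∉ S) G]
  congr 1
  refine Finset.sum_nbij' (fun S => S.erase i) (fun S => insert i S) ?_ ?_ ?_ ?_ ?_
  · intro S _; simp
  · intro S hS; simp at hS ⊢
  · intro S hS; simp at hS; exact Finset.insert_erase hS
  · intro S hS; simp at hS; exact Finset.erase_insert hS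
  · intro S hS; simp at hS; rw [Finset.insert_erase hS]

lemma cubeE_add {n : ℕ} (F G : (Fin n → Bool) → ℝ) :
    cubeE (1/2) (fun x => F x + G x) = cubeE (1/2) F + cubeE (1/2) G := by
  unfold cubeE
  rw [← Finset.sum_add_distrib]
  exact Finset.sum_congr rfl fun x _ => by ring

lemma chi_insert {n : ℕ} (i : Fin n) (S : Finset (Fin n)) (hi : i ∉ S) (x : Fin n → Bool) :
    chi (1/2) (insert i S) x = chi (1/2) {i} x * chi (1/2) S x := by
  rw [chi_mul]
  congr 1
  rw [symmDiff_eq_sup_sdiff_inf]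
  have h1 : ({i} : Finset (Fin n)) ⊓ S = ∅ := by
    simp [Finset.singleton_inter_of_notMem hi]
  rw [h1, Finset.sdiff_empty, Finset.sup_eq_union, ← Finset.insert_eq]

set_option maxHeartbeats 2000000 in
lemma hyper {n : ℕ} (J : Finset (Fin n)) : ∀ (r : ℕ) (a : Finset (Fin n) → ℝ),
    (∀ S, a S ≠ 0 → S ⊆ J ∧ S.card ≤ r) →
    cubeE (1/2) (fun x => (∑ S : Finset (Fin n), a S * chi (1/2) S x)^4) ≤
      9^r * (∑ S : Finset (Fin n), (a S)^2)^2 := by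
  classical
  induction J using Finset.induction_on with
  | empty =>
    intro r a ha
    have hz : ∀ S : Finset (Fin n), S ≠ ∅ → a S = 0 := by
      intro S hS
      by_contra h
      exact hS (Finset.subset_empty.mp (ha S h).1)
    have hW : ∀ x : Fin n → Bool, ∑ S : Finset (Fin n), a S * chi (1/2) S x = a ∅ := by
      intro x
      rw [Finset.sum_eq_single ∅ (fun S _ hS => by rw [hz S hS, zero_mul])
        (fun h => absurd (Finset.mem_univ _) h)]
      simp [chi]
    have hA : ∑ S : Finset (Fin n), (a S)^2 = (a ∅)^2 := by
      rw [Finset.sum_eq_single ∅ (fun S _ hS => by rw [hz S hS]; ring)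
        (fun h => absurd (Finset.mem_univ _) h)]
    simp only [hW, hA]
    rw [cubeE_const]
    have h9 : (1:ℝ) ≤ 9^r := one_le_pow₀ (by norm_num)
    nlinarith [sq_nonneg ((a ∅)^2)]
  | @insert i J₀ hi ih =>
    intro r a ha
    set c : (Fin n → Bool) → ℝ := fun x => chi (1/2) {i} x with hc
    set aE : Finset (Fin n) → ℝ := fun S => if i ∈ S then 0 else a S with haE
    set aD : Finset (Fin n) → ℝ := fun S => if i ∈ S then 0 else a (insert i S) with haD
    set E : (Fin n → Bool) → ℝ := fun x => ∑ S : Finset (Fin n), aE S * chi (1/2) S x with hE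
    set D : (Fin n → Bool) → ℝ := fun x => ∑ S : Finset (Fin n), aD S * chi (1/2) S x with hD
    -- filter sums equal ite sums
    have hfe : ∀ (b : Finset (Fin n) → ℝ) (G : Finset (Fin n) → ℝ),
        ∑ S : Finset (Fin n), (if i ∈ S then 0 else b S) * G S =
        ∑ S ∈ Finset.univ.filter (fun S : Finset (Fin n) => i ∉ S), b S * G S := by
      intro b G
      rw [Finset.sum_filter]
      refine Finset.sum_congr rfl fun S _ => ?_
      by_cases h : i ∈ S <;> simp [h]
    have hW : ∀ x : Fin n → Bool,
        ∑ S : Finset (Fin n), a S * chi (1/2) S x = E x + c x * D x := by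
      intro x
      rw [sum_insert_split i (fun S => a S * chi (1/2) S x)]
      congr 1
      · simp only [hE, haE]
        exact (hfe a (fun S => chi (1/2) S x)).symm
      · simp only [hD, haD, hc]
        rw [hfe (fun S => a (insert i S)) (fun S => chi (1/2) S x), Finset.mul_sum]
        refine Finset.sum_congr rfl fun S hS => ?_
        simp only [Finset.mem_filter] at hS
        rw [chi_insert i S hS.2]
        ring
    have hEinv : ∀ (x : Fin n → Bool) b, E (Function.update x i b) = E x := by
      intro x b
      simp only [hE]
      refine Finset.sum_congr rfl fun S _ => ?_
      by_cases h : i ∈ S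
      · simp [haE, h]
      · rw [chi_indep i S h]
    have hDinv : ∀ (x : Fin n → Bool) b, D (Function.update x i b) = D x := by
      intro x b
      simp only [hD]
      refine Finset.sum_congr rfl fun S _ => ?_
      by_cases h : i ∈ S
      · simp [haD, h]
      · rw [chi_indep i S h]
    -- expectation splits
    have hsplit : cubeE (1/2) (fun x => (∑ S : Finset (Fin n), a S * chi (1/2) S x)^4) =
        cubeE (1/2) (fun x => E x^4) + 6 * cubeE (1/2) (fun x => E x^2 * D x^2) +
          cubeE (1/2) (fun x => D x^4) := by
      have hpt : (fun x => (∑ S : Finset (Fin n), a S * chi (1/2) S x)^4) =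
          fun x => (E x^4 + 6*(E x^2 * D x^2) + D x^4) +
            c x * (4*E x^3*D x + 4*E x*D x^3) := by
        funext x
        rw [hW x]
        have hcx : c x ^ 2 = 1 := chi_half_sq {i} x
        linear_combination (6*(E x)^2*(D x)^2 + (D x)^4*((c x)^2+1) + 4*(E x)*(D x)^3*(c x)) * hcx
      rw [hpt, cubeE_add]
      have h0 : cubeE (1/2) (fun x => c x * (4*E x^3*D x + 4*E x*D x^3)) = 0 := by
        refine cubeE_flip i _ fun x b => ?_
        rw [hEinv x b, hDinv x b]
      rw [h0, add_zero]
      have : (fun x => E x^4 + 6*(E x^2*D x^2) + D x^4) =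
          fun x => (E x^4 + 6*(E x^2*D x^2)) + D x^4 := by funext x; ring
      rw [this, cubeE_add]
      have h6 : cubeE (1/2) (fun x => E x^4 + 6*(E x^2*D x^2)) =
          cubeE (1/2) (fun x => E x^4) + 6 * cubeE (1/2) (fun x => E x^2*D x^2) := by
        rw [cubeE_add]
        congr 1
        have : (fun x => 6*(E x^2*D x^2)) = fun x => (6:ℝ) * (E x^2*D x^2) := rfl
        unfold cubeE
        rw [Finset.mul_sum]
        exact Finset.sum_congr rfl fun x _ => by ring
      rw [h6]
    set e₂ : ℝ := ∑ S : Finset (Fin n), (aE S)^2 with he₂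
    set d₂ : ℝ := ∑ S : Finset (Fin n), (aD S)^2 with hd₂
    have he₂0 : 0 ≤ e₂ := Finset.sum_nonneg fun S _ => sq_nonneg _
    have hd₂0 : 0 ≤ d₂ := Finset.sum_nonneg fun S _ => sq_nonneg _
    have hE4 : cubeE (1/2) (fun x => E x^4) ≤ 9^r * e₂^2 := by
      refine ih r aE fun S hS => ?_
      by_cases h : i ∈ S
      · simp [haE, h] at hS
      · simp only [haE, if_neg h] at hS
        obtain ⟨h1, h2⟩ := ha S hS
        refine ⟨fun j hj => ?_, h2⟩
        rcases Finset.mem_insert.mp (h1 hj) with h' | h'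
        · exact absurd (h' ▸ hj) h
        · exact h'
    have hD4 : cubeE (1/2) (fun x => D x^4) ≤ 9^(r-1) * d₂^2 := by
      refine ih (r-1) aD fun S hS => ?_
      by_cases h : i ∈ S
      · simp [haD, h] at hS
      · simp only [haD, if_neg h] at hS
        obtain ⟨h1, h2⟩ := ha _ hS
        constructor
        · intro j hj
          have := h1 (Finset.mem_insert_of_mem hj)
          rcases Finset.mem_insert.mp this with h' | h'
          · exact absurd (h' ▸ hj) h
          · exact h'
        · have hcard : S.card + 1 ≤ r := by
            rwa [Finset.card_insert_of_notMem h] at h2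
          omega
    have hED : cubeE (1/2) (fun x => E x^2 * D x^2) ≤ (3^r * e₂) * (3^(r-1) * d₂) := by
      have h1 : (cubeE (1/2) (fun x => E x^2 * D x^2))^2 ≤
          cubeE (1/2) (fun x => E x^4) * cubeE (1/2) (fun x => D x^4) := by
        have := cubeE_CS (fun x => E x^2) (fun x => D x^2)
        have h4 : ∀ g : (Fin n → Bool) → ℝ, (fun x => (g x^2)^2) = fun x => g x^4 := by
          intro g; funext x; ring
        rwa [h4 E, h4 D] at this
      have h2 : (cubeE (1/2) (fun x => E x^2 * D x^2))^2 ≤ (9^r * e₂^2) * (9^(r-1) * d₂^2) := by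
        refine h1.trans (mul_le_mul hE4 hD4 (cubeE_nonneg fun x => by positivity) ?_)
        positivity
      have h3 : (9:ℝ)^r * e₂^2 * (9^(r-1) * d₂^2) = ((3^r * e₂) * (3^(r-1) * d₂))^2 := by
        have : (9:ℝ) = 3^2 := by norm_num
        rw [this, ← pow_mul, ← pow_mul]
        ring
      rw [h3] at h2
      have hnn : 0 ≤ cubeE (1/2) (fun x => E x^2 * D x^2) :=
        cubeE_nonneg fun x => by positivity
      have hrhs : 0 ≤ (3:ℝ)^r * e₂ * (3^(r-1) * d₂) := by positivity
      nlinarith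
    have hfe2 : ∀ b : Finset (Fin n) → ℝ,
        ∑ S : Finset (Fin n), (if i ∈ S then 0 else b S)^2 =
        ∑ S ∈ Finset.univ.filter (fun S : Finset (Fin n) => i ∉ S), b S ^ 2 := by
      intro b
      rw [Finset.sum_filter]
      refine Finset.sum_congr rfl fun S _ => ?_
      by_cases h : i ∈ S <;> simp [h]
    have hsum : ∑ S : Finset (Fin n), (a S)^2 = e₂ + d₂ := by
      rw [sum_insert_split i (fun S => (a S)^2)]
      congr 1
      · simp only [he₂, haE]
        exact (hfe2 a).symm
      · simp only [hd₂, haD]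
        exact (hfe2 (fun S => a (insert i S))).symm
    -- key coefficient inequality
    have hkey : 6 * ((3:ℝ)^r * e₂) * (3^(r-1) * d₂) ≤ 2 * 9^r * e₂ * d₂ := by
      cases r with
      | zero =>
        have hd0 : d₂ = 0 := by
          rw [hd₂]
          refine Finset.sum_eq_zero fun S _ => ?_
          have : aD S = 0 := by
            by_cases h : i ∈ S
            · simp [haD, h]
            · simp only [haD, if_neg h]
              by_contra hne
              have := (ha _ hne).2
              simp [Finset.card_insert_of_notMem h] at this
          rw [this]; ring
        rw [hd0]; ring_nf; simp
      | succ k =>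
        have : (6:ℝ) * (3^(k+1) * e₂) * (3^(k+1-1) * d₂) = 2 * 9^(k+1) * e₂ * d₂ := by
          have h9 : (9:ℝ)^(k+1) = 3^(k+1) * 3^(k+1) := by
            rw [show (9:ℝ) = 3*3 by norm_num, mul_pow]
          rw [h9, Nat.add_sub_cancel, pow_succ]
          ring
        linarith
    have h99 : (9:ℝ)^(r-1) ≤ 9^r := pow_le_pow_right₀ (by norm_num) (Nat.sub_le r 1)
    rw [hsplit, hsum]
    have final : cubeE (1/2) (fun x => E x^4) + 6 * cubeE (1/2) (fun x => E x^2*D x^2) +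
        cubeE (1/2) (fun x => D x^4) ≤ 9^r * e₂^2 + 2*9^r*e₂*d₂ + 9^r * d₂^2 := by
      have h6 : 6 * cubeE (1/2) (fun x => E x^2*D x^2) ≤ 2*9^r*e₂*d₂ := by
        calc 6 * cubeE (1/2) (fun x => E x^2*D x^2) ≤ 6 * ((3^r * e₂) * (3^(r-1) * d₂)) := by
              linarith
          _ = 6 * (3^r * e₂) * (3^(r-1) * d₂) := by ring
          _ ≤ 2*9^r*e₂*d₂ := hkey
      have hD4' : cubeE (1/2) (fun x => D x^4) ≤ 9^r * d₂^2 := by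
        refine hD4.trans ?_
        exact mul_le_mul_of_nonneg_right h99 (sq_nonneg _)
      linarith
    calc _ ≤ (9:ℝ)^r * e₂^2 + 2*9^r*e₂*d₂ + 9^r * d₂^2 := final
      _ = 9^r * (e₂ + d₂)^2 := by ring

lemma planch {n : ℕ} (b : Finset (Fin n) → ℝ) (S : Finset (Fin n)) :
    cubeE (1/2) (fun x => chi (1/2) S x * ∑ T : Finset (Fin n), b T * chi (1/2) T x) = b S := by
  have h1 : (fun x => chi (1/2) S x * ∑ T : Finset (Fin n), b T * chi (1/2) T x) =
      fun x => ∑ T : Finset (Fin n), b T * (chi (1/2) S x * chi (1/2) T x) := by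
    funext x
    rw [Finset.mul_sum]
    exact Finset.sum_congr rfl fun T _ => by ring
  rw [h1, cubeE_sum]
  have h2 : ∀ T : Finset (Fin n),
      cubeE (1/2) (fun x => b T * (chi (1/2) S x * chi (1/2) T x)) =
        b T * if S = T then 1 else 0 := by
    intro T
    rw [cubeE_const_mul, cubeE_chi_mul_chi]
  rw [Finset.sum_congr rfl fun T _ => h2 T]
  simp

theorem stmt10 {n : ℕ} (f : (Fin n → Bool) → ℝ) (hBool : ∀ x, f x = 0 ∨ f x = 1)
    (r : ℕ) (hr : 0 < r) :
    cubeE (1/2) (fun x => (trunc (1/2) f r x) ^ 2) ≤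
      3 ^ r * (cubeE (1/2) f) ^ ((3 : ℝ) / 2) := by
  classical
  set a : Finset (Fin n) → ℝ := fun S => if S.card ≤ r then fhat (1/2) f S else 0 with ha
  have hW : ∀ x, trunc (1/2) f r x = ∑ S : Finset (Fin n), a S * chi (1/2) S x := by
    intro x
    rw [trunc, Finset.sum_filter]
    refine Finset.sum_congr rfl fun S _ => ?_
    by_cases h : S.card ≤ r <;> simp [ha, h]
  set m : ℝ := ∑ S : Finset (Fin n), (a S)^2 with hm
  have hm0 : 0 ≤ m := Finset.sum_nonneg fun S _ => sq_nonneg _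
  have hf01 : ∀ x, 0 ≤ f x := fun x => by rcases hBool x with h | h <;> rw [h] <;> norm_num
  have hff : ∀ x, f x * f x = f x := fun x => by rcases hBool x with h | h <;> rw [h] <;> ring
  set μ : ℝ := cubeE (1/2) f with hμ
  have hμ0 : 0 ≤ μ := cubeE_nonneg hf01
  -- E[W^2] = m
  have hW2 : cubeE (1/2) (fun x => (trunc (1/2) f r x)^2) = m := by
    have h1 : (fun x => (trunc (1/2) f r x)^2) =
        fun x => ∑ S : Finset (Fin n), a S *
          (chi (1/2) S x * ∑ T : Finset (Fin n), a T * chi (1/2) T x) := by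
      funext x
      rw [hW x, sq, Finset.sum_mul]
      exact Finset.sum_congr rfl fun S _ => by ring
    rw [h1, cubeE_sum, hm]
    refine Finset.sum_congr rfl fun S _ => ?_
    rw [cubeE_const_mul, planch, sq]
  -- E[W f] = m
  have hWf : cubeE (1/2) (fun x => trunc (1/2) f r x * f x) = m := by
    have h1 : (fun x => trunc (1/2) f r x * f x) =
        fun x => ∑ S : Finset (Fin n), a S * (f x * chi (1/2) S x) := by
      funext x
      rw [hW x, Finset.sum_mul]
      exact Finset.sum_congr rfl fun S _ => by ring
    rw [h1, cubeE_sum, hm]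
    refine Finset.sum_congr rfl fun S _ => ?_
    rw [cubeE_const_mul]
    show a S * fhat (1/2) f S = a S ^ 2
    by_cases h : S.card ≤ r
    · rw [sq]; congr 1; simp [ha, h]
    · simp [ha, h]
  -- Cauchy-Schwarz 1 : m^2 ≤ E[W^2 f] * μ
  have hCS1 : m^2 ≤ cubeE (1/2) (fun x => (trunc (1/2) f r x)^2 * f x) * μ := by
    have := cubeE_CS (fun x => trunc (1/2) f r x * f x) f
    have e1 : (fun x => trunc (1/2) f r x * f x * f x) =
        fun x => trunc (1/2) f r x * f x := by
      funext x; rw [mul_assoc, hff x]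
    have e2 : (fun x => (trunc (1/2) f r x * f x)^2) =
        fun x => (trunc (1/2) f r x)^2 * f x := by
      funext x
      have : f x ^ 2 = f x := by rw [sq, hff x]
      rw [mul_pow, this]
    have e3 : (fun x => f x ^ 2) = f := by funext x; rw [sq, hff x]
    rw [e1, e2, e3, hWf] at this
    exact this
  -- Cauchy-Schwarz 2 : E[W^2 f]^2 ≤ E[W^4] * μ
  have hCS2 : (cubeE (1/2) (fun x => (trunc (1/2) f r x)^2 * f x))^2 ≤
      cubeE (1/2) (fun x => (trunc (1/2) f r x)^4) * μ := by
    have := cubeE_CS (fun x => (trunc (1/2) f r x)^2) f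
    have e1 : (fun x => ((trunc (1/2) f r x)^2)^2) = fun x => (trunc (1/2) f r x)^4 := by
      funext x; ring
    have e3 : (fun x => f x ^ 2) = f := by funext x; rw [sq, hff x]
    rw [e1, e3] at this
    exact this
  -- hypercontractivity
  have hhyp : cubeE (1/2) (fun x => (trunc (1/2) f r x)^4) ≤ 9^r * m^2 := by
    have h1 : (fun x => (trunc (1/2) f r x)^4) =
        fun x => (∑ S : Finset (Fin n), a S * chi (1/2) S x)^4 := by
      funext x; rw [hW x]
    rw [h1, hm]
    refine hyper Finset.univ r a fun S hS => ?_
    refine ⟨Finset.subset_univ S, ?_⟩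
    by_contra h
    simp [ha, h] at hS
  -- combine: m^4 ≤ 9^r m^2 μ^3
  have hE2f0 : 0 ≤ cubeE (1/2) (fun x => (trunc (1/2) f r x)^2 * f x) :=
    cubeE_nonneg fun x => mul_nonneg (sq_nonneg _) (hf01 x)
  have hmain : m^4 ≤ 9^r * m^2 * μ^3 := by
    have h1 : (m^2)^2 ≤ (cubeE (1/2) (fun x => (trunc (1/2) f r x)^2 * f x) * μ)^2 :=
      pow_le_pow_left₀ (sq_nonneg m) hCS1 2
    have h2 : (cubeE (1/2) (fun x => (trunc (1/2) f r x)^2 * f x) * μ)^2 =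
        (cubeE (1/2) (fun x => (trunc (1/2) f r x)^2 * f x))^2 * μ^2 := by ring
    have h3 : (cubeE (1/2) (fun x => (trunc (1/2) f r x)^2 * f x))^2 * μ^2 ≤
        (cubeE (1/2) (fun x => (trunc (1/2) f r x)^4) * μ) * μ^2 :=
      mul_le_mul_of_nonneg_right hCS2 (sq_nonneg μ)
    have h4 : (cubeE (1/2) (fun x => (trunc (1/2) f r x)^4) * μ) * μ^2 ≤
        (9^r * m^2 * μ) * μ^2 := by
      have := mul_le_mul_of_nonneg_right hhyp hμ0
      nlinarith [sq_nonneg μ]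
    nlinarith
  rw [hW2]
  -- final step
  rcases eq_or_lt_of_le hm0 with hm' | hm'
  · rw [← hm']
    positivity
  · have hm2 : m^2 ≤ 9^r * μ^3 := by nlinarith [hmain, pow_pos hm' 2]
    have hRsq : (3^r * μ ^ ((3:ℝ)/2))^2 = 9^r * μ^3 := by
      rw [mul_pow]
      congr 1
      · rw [← pow_mul, show (9:ℝ) = 3^2 by norm_num, ← pow_mul, mul_comm]
      · rw [← Real.rpow_natCast (μ ^ ((3:ℝ)/2)) 2, ← Real.rpow_mul hμ0]
        norm_num
    have hR0 : 0 ≤ 3^r * μ ^ ((3:ℝ)/2) := by positivity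
    have hm2' : m^2 ≤ (3^r * μ ^ ((3:ℝ)/2))^2 := by rw [hRsq]; exact hm2
    exact (pow_le_pow_iff_left₀ hm0 hR0 two_ne_zero).mp hm2'
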